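/- If 1 ≤ x < 2, then for every n ≥ 0 the logarithm recurrence satisfies Eₙ ≤ x < Eₙ · ∏_{k=n}^∞ (1 + 2⁻ᵏ). -/

import Mathlib

/-- Restoring shift-and-add recurrence for computing `ln x`:
`(logRec x n).1 = Eₙ` and `(logRec x n).2 = Lₙ`, with `E₀ = 1`, `L₀ = 0`,
`dₙ = 1` iff `Eₙ (1 + 2⁻ⁿ) ≤ x`, `Eₙ₊₁ = Eₙ (1 + dₙ 2⁻ⁿ)`,
`Lₙ₊₁ = Lₙ + dₙ ln (1 + 2⁻ⁿ)`. -/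
noncomputable def logRec (x : ℝ) : ℕ → ℝ × ℝ
  | 0 => (1, 0)
  | n + 1 =>
    let p := logRec x n
    if p.1 * (1 + (2 : ℝ) ^ (-(n : ℤ))) ≤ x then
      (p.1 * (1 + (2 : ℝ) ^ (-(n : ℤ))), p.2 + Real.log (1 + (2 : ℝ) ^ (-(n : ℤ))))
    else p

namespace LogRecAux

lemma apos (m k : ℕ) : (0:ℝ) < 1 + (2 : ℝ) ^ (-((m + k : ℕ) : ℤ)) := by positivity

lemma summable_a (m : ℕ) : Summable (fun k : ℕ => (2 : ℝ) ^ (-((m + k : ℕ) : ℤ))) := by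
  have : (fun k : ℕ => (2 : ℝ) ^ (-((m + k : ℕ) : ℤ)))
      = fun k : ℕ => (2 : ℝ) ^ (-(m : ℤ)) * (1/2 : ℝ) ^ k := by
    funext k
    push_cast
    rw [neg_add, zpow_add₀ (by norm_num : (2:ℝ) ≠ 0)]
    congr 1
    rw [zpow_neg, zpow_natCast, one_div, inv_pow]
  rw [this]
  exact (summable_geometric_of_lt_one (by norm_num) (by norm_num)).mul_left _

lemma tsum_a (m : ℕ) : ∑' k : ℕ, (2 : ℝ) ^ (-((m + k : ℕ) : ℤ)) = (2:ℝ) ^ (-(m:ℤ)) * 2 := by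
  have : (fun k : ℕ => (2 : ℝ) ^ (-((m + k : ℕ) : ℤ)))
      = fun k : ℕ => (2 : ℝ) ^ (-(m : ℤ)) * (1/2 : ℝ) ^ k := by
    funext k
    push_cast
    rw [neg_add, zpow_add₀ (by norm_num : (2:ℝ) ≠ 0)]
    congr 1
    rw [zpow_neg, zpow_natCast, one_div, inv_pow]
  rw [this, tsum_mul_left, tsum_geometric_two]

lemma multipliable (m : ℕ) :
    Multipliable (fun k : ℕ => 1 + (2 : ℝ) ^ (-((m + k : ℕ) : ℤ))) := by
  apply Real.multipliable_of_summable_log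
    (fun k => apos m k)
  apply Summable.of_nonneg_of_le
    (fun k => Real.log_nonneg (le_add_of_nonneg_right (by positivity)))
    (fun k => ?_) (summable_a m)
  have := Real.log_le_sub_one_of_pos (apos m k)
  linarith

lemma lower (m : ℕ) :
    1 + (2:ℝ) ^ (-(m:ℤ)) * 2 ≤ ∏' k : ℕ, (1 + (2 : ℝ) ^ (-((m + k : ℕ) : ℤ))) := by
  have hfin : ∀ N : ℕ, 1 + ∑ k ∈ Finset.range N, (2 : ℝ) ^ (-((m + k : ℕ) : ℤ))
      ≤ ∏ k ∈ Finset.range N, (1 + (2 : ℝ) ^ (-((m + k : ℕ) : ℤ))) := by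
    intro N
    induction N with
    | zero => simp
    | succ N ih =>
      rw [Finset.sum_range_succ, Finset.prod_range_succ]
      have h1 : (0:ℝ) ≤ (2 : ℝ) ^ (-((m + N : ℕ) : ℤ)) := by positivity
      have h2 : (0:ℝ) ≤ ∑ k ∈ Finset.range N, (2 : ℝ) ^ (-((m + k : ℕ) : ℤ)) :=
        Finset.sum_nonneg fun k _ => by positivity
      nlinarith
  have htend : Filter.Tendsto
      (fun N : ℕ => 1 + ∑ k ∈ Finset.range N, (2 : ℝ) ^ (-((m + k : ℕ) : ℤ)))
      Filter.atTop (nhds (1 + (2:ℝ) ^ (-(m:ℤ)) * 2)) := by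
    have := (summable_a m).hasSum.tendsto_sum_nat
    rw [tsum_a m] at this
    exact (tendsto_const_nhds.add this)
  have hp := (multipliable m).hasProd.tendsto_prod_nat
  exact le_of_tendsto_of_tendsto' htend hp hfin

lemma peel (m : ℕ) :
    ∏' k : ℕ, (1 + (2 : ℝ) ^ (-((m + k : ℕ) : ℤ)))
      = (1 + (2 : ℝ) ^ (-(m : ℤ))) * ∏' k : ℕ, (1 + (2 : ℝ) ^ (-((m + 1 + k : ℕ) : ℤ))) := by
  have hshift : (fun k : ℕ => 1 + (2 : ℝ) ^ (-((m + (k + 1) : ℕ) : ℤ)))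
      = fun k : ℕ => 1 + (2 : ℝ) ^ (-((m + 1 + k : ℕ) : ℤ)) := by
    funext k; congr 2; push_cast; ring
  have hf : Multipliable (fun k : ℕ => 1 + (2 : ℝ) ^ (-((m + (k + 1) : ℕ) : ℤ))) := by
    rw [hshift]; exact multipliable (m + 1)
  have h := tprod_eq_zero_mul' (f := fun k : ℕ => 1 + (2 : ℝ) ^ (-((m + k : ℕ) : ℤ))) hf
  rw [h, hshift]
  norm_num

lemma E_ge_one (x : ℝ) (hx1 : 1 ≤ x) : ∀ n, 1 ≤ (logRec x n).1 := by
  intro n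
  induction n with
  | zero => simp [logRec]
  | succ n ih =>
    rw [logRec]
    split
    · simp only
      nlinarith [zpow_pos (by norm_num : (0:ℝ) < 2) (-(n:ℤ))]
    · exact ih

end LogRecAux

/-- If `1 ≤ x < 2`, then for every `n`, `Eₙ ≤ x < Eₙ · ∏_{k=n}^∞ (1 + 2⁻ᵏ)`. -/
theorem logRec_sandwich (x : ℝ) (hx1 : 1 ≤ x) (hx2 : x < 2) (n : ℕ) :
    (logRec x n).1 ≤ x ∧
      x < (logRec x n).1 * ∏' k : ℕ, (1 + (2 : ℝ) ^ (-((n + k : ℕ) : ℤ))) := by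
  induction n with
  | zero =>
    constructor
    · simp [logRec, hx1]
    · have h1 := LogRecAux.lower 1
      have hp := LogRecAux.peel 0
      simp only [logRec]
      rw [hp]
      norm_num at h1 ⊢
      nlinarith
  | succ n ih =>
    obtain ⟨ih1, ih2⟩ := ih
    have hE := LogRecAux.E_ge_one x hx1 n
    rw [logRec]
    split
    · rename_i h
      refine ⟨h, ?_⟩
      rw [LogRecAux.peel n] at ih2
      simp only
      calc x < (logRec x n).1 * ((1 + (2 : ℝ) ^ (-(n : ℤ))) *
            ∏' k : ℕ, (1 + (2 : ℝ) ^ (-((n + 1 + k : ℕ) : ℤ)))) := ih2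
        _ = _ := by ring
    · rename_i h
      push_neg at h
      refine ⟨ih1, ?_⟩
      have hlow := LogRecAux.lower (n + 1)
      have key : 1 + (2 : ℝ) ^ (-(n : ℤ))
          ≤ ∏' k : ℕ, (1 + (2 : ℝ) ^ (-((n + 1 + k : ℕ) : ℤ))) := by
        have : (2:ℝ) ^ (-((n+1:ℕ):ℤ)) * 2 = (2:ℝ) ^ (-(n:ℤ)) := by
          push_cast
          rw [neg_add, zpow_add₀ (by norm_num : (2:ℝ) ≠ 0)]
          norm_num
          ring
        rw [← this]; push_cast at hlow ⊢; linarith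
      calc x < (logRec x n).1 * (1 + (2 : ℝ) ^ (-(n : ℤ))) := h
        _ ≤ (logRec x n).1 * ∏' k : ℕ, (1 + (2 : ℝ) ^ (-((n + 1 + k : ℕ) : ℤ))) := by
            apply mul_le_mul_of_nonneg_left key (by linarith)
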